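/- Let H be a Hilbert space, P(ξ) a smooth family of finite-rank orthogonal projections on H indexed by ξ ∈ ℝ², and suppose there are: (a) an antiunitary operator C with C P(ξ) C⁻¹ = P(−ξ), and (b) a unitary operator I with I P(ξ) I⁻¹ = P(−ξ). Then the Berry curvature trace B(ξ) = Tr(P(ξ)[∂₁P(ξ), ∂₂P(ξ)]) vanishes identically. -/

import Mathlib

open scoped InnerProductSpace

section Aux

variable {H : Type*} [NormedAddCommGroup H] [InnerProductSpace ℂ H]

/-- An antiunitary map conjugates inner products. -/
lemma BerryAux.antiunitary_inner (f : H ≃ₛₗᵢ[starRingEnd ℂ] H) (x y : H) :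
    ⟪f x, f y⟫_ℂ = ⟪y, x⟫_ℂ := by
  rw [← inner_conj_symm y x]
  rw [inner_eq_sum_norm_sq_div_four (𝕜 := ℂ) x y,
    inner_eq_sum_norm_sq_div_four (𝕜 := ℂ) (f x) (f y)]
  simp only [RCLike.I_to_complex]
  have h1 : ‖f x + f y‖ = ‖x + y‖ := by rw [← map_add]; exact f.norm_map _
  have h2 : ‖f x - f y‖ = ‖x - y‖ := by rw [← map_sub]; exact f.norm_map _
  have hiy : f (Complex.I • y) = -(Complex.I • f y) := by
    rw [f.map_smulₛₗ, Complex.conj_I, neg_smul]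
  have h3 : ‖f x - Complex.I • f y‖ = ‖x + Complex.I • y‖ := by
    rw [← f.norm_map (x + Complex.I • y), map_add, hiy, sub_eq_add_neg]
  have h4 : ‖f x + Complex.I • f y‖ = ‖x - Complex.I • y‖ := by
    rw [← f.norm_map (x - Complex.I • y), map_sub, hiy, sub_neg_eq_add]
  rw [h1, h2, h3, h4]
  rw [map_div₀, map_add, map_sub, map_mul, map_sub]
  simp only [map_pow, RCLike.conj_ofReal, Complex.conj_ofReal, Complex.conj_I, map_ofNat]
  ring

/-- Trace as a sum of inner products over an orthonormal basis. -/
lemma BerryAux.trace_eq_sum_inner [FiniteDimensional ℂ H] {ι : Type*} [Fintype ι]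
    [DecidableEq ι] (b : OrthonormalBasis ι ℂ H) (f : H →ₗ[ℂ] H) :
    LinearMap.trace ℂ H f = ∑ i, ⟪b i, f (b i)⟫_ℂ := by
  rw [LinearMap.trace_eq_matrix_trace ℂ b.toBasis, Matrix.trace]
  congr 1
  ext i
  rw [Matrix.diag_apply, LinearMap.toMatrix_apply, b.coe_toBasis_repr_apply, b.coe_toBasis,
    b.repr_apply_apply]

/-- The image of an orthonormal basis under an antiunitary map is an orthonormal basis. -/
noncomputable def BerryAux.mapONB [FiniteDimensional ℂ H] {ι : Type*} [Fintype ι]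
    [DecidableEq ι] (b : OrthonormalBasis ι ℂ H) (f : H ≃ₛₗᵢ[starRingEnd ℂ] H) :
    OrthonormalBasis ι ℂ H := by
  refine OrthonormalBasis.mk (v := fun i => f (b i)) ?_ ?_
  · rw [orthonormal_iff_ite]
    intro i j
    rw [BerryAux.antiunitary_inner]
    rw [orthonormal_iff_ite.mp b.orthonormal j i]
    by_cases h : i = j
    · simp [h]
    · rw [if_neg h, if_neg (fun hji => h hji.symm)]
  · intro x _
    have hx : x = ∑ i, (starRingEnd ℂ) (b.repr (f.symm x) i) • f (b i) := by
      conv_lhs => rw [← f.apply_symm_apply x, ← b.sum_repr (f.symm x)]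
      rw [map_sum]
      congr 1
      ext i
      rw [f.map_smulₛₗ]
    rw [hx]
    exact Submodule.sum_mem _ fun i _ =>
      Submodule.smul_mem _ _ (Submodule.subset_span ⟨i, rfl⟩)

@[simp] lemma BerryAux.mapONB_apply [FiniteDimensional ℂ H] {ι : Type*} [Fintype ι]
    [DecidableEq ι] (b : OrthonormalBasis ι ℂ H) (f : H ≃ₛₗᵢ[starRingEnd ℂ] H) (i : ι) :
    BerryAux.mapONB b f i = f (b i) := by
  rw [BerryAux.mapONB]
  exact congrFun (OrthonormalBasis.coe_mk _ _) i

end Aux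

/-- The trace of the Berry curvature `B(ξ) = Tr(P(ξ)[∂₁P(ξ), ∂₂P(ξ)])` of a family of
projections `P` on a Hilbert space, indexed by `ξ ∈ ℝ²`. -/
noncomputable def berryTrace {H : Type*} [NormedAddCommGroup H] [InnerProductSpace ℂ H]
    (P : ℝ × ℝ → H →L[ℂ] H) (ξ : ℝ × ℝ) : ℂ :=
  LinearMap.trace ℂ H
    ((P ξ ∘L (fderiv ℝ P ξ (1, 0) ∘L fderiv ℝ P ξ (0, 1) -
        fderiv ℝ P ξ (0, 1) ∘L fderiv ℝ P ξ (1, 0))).toLinearMap)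

/-- If a smooth family of finite-rank orthogonal projections `P(ξ)` is intertwined with
`P(−ξ)` both by an antiunitary operator `C` and by a unitary operator `J`, then the
Berry curvature trace `B(ξ) = Tr(P(ξ)[∂₁P(ξ), ∂₂P(ξ)])` vanishes identically. -/
theorem berryTrace_eq_zero_of_symmetries {H : Type*} [NormedAddCommGroup H]
    [InnerProductSpace ℂ H] [CompleteSpace H]
    (P : ℝ × ℝ → H →L[ℂ] H)
    (hsa : ∀ ξ, IsSelfAdjoint (P ξ))
    (hproj : ∀ ξ, P ξ ∘L P ξ = P ξ)
    (hfin : ∀ ξ, FiniteDimensional ℂ (LinearMap.range (P ξ).toLinearMap))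
    (hdiff : Differentiable ℝ P)
    (C : H ≃ₛₗᵢ[starRingEnd ℂ] H)
    (hC : ∀ ξ x, C (P ξ x) = P (-ξ) (C x))
    (J : H ≃ₗᵢ[ℂ] H)
    (hJ : ∀ ξ x, J (P ξ x) = P (-ξ) (J x)) :
    ∀ ξ : ℝ × ℝ, berryTrace P ξ = 0 := by
  intro ξ
  by_cases hfd : FiniteDimensional ℂ H
  swap
  · -- in the infinite-dimensional case, `LinearMap.trace` vanishes by definition
    have hnb : ¬ ∃ s : Finset H, Nonempty (Module.Basis s ℂ H) := by
      rintro ⟨s, ⟨b⟩⟩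
      exact hfd (Module.Finite.of_basis b)
    rw [berryTrace, LinearMap.trace, dif_neg hnb]
    rfl
  -- the antiunitary symmetry `K` fixing each `P ξ`
  set K : H ≃ₛₗᵢ[starRingEnd ℂ] H := C.trans J.symm with hKdef
  have hK : ∀ η x, K (P η x) = P η (K x) := by
    intro η x
    have h1 : J (P η (J.symm (C x))) = P (-η) (C x) := by
      rw [hJ η (J.symm (C x)), J.apply_symm_apply]
    have h2 := congrArg J.symm h1
    rw [J.symm_apply_apply] at h2
    calc K (P η x) = J.symm (C (P η x)) := rfl
      _ = J.symm (P (-η) (C x)) := by rw [hC]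
      _ = P η (J.symm (C x)) := h2.symm
      _ = P η (K x) := rfl
  -- notation for the derivatives
  set D : ℝ × ℝ → H →L[ℂ] H := fun v => fderiv ℝ P ξ v with hDdef
  set A : H →L[ℂ] H := P ξ ∘L (D (1, 0) ∘L D (0, 1) - D (0, 1) ∘L D (1, 0)) with hAdef
  have hgoal : berryTrace P ξ = LinearMap.trace ℂ H A.toLinearMap := rfl
  -- evaluation maps as real-linear continuous maps
  have hev : ∀ x : H,
      HasFDerivAt (fun η => P η x)
        (((ContinuousLinearMap.apply ℂ H x).restrictScalars ℝ).comp (fderiv ℝ P ξ)) ξ :=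
    fun x => (((ContinuousLinearMap.apply ℂ H x).restrictScalars ℝ).hasFDerivAt).comp ξ
      (hdiff ξ).hasFDerivAt
  -- K commutes with the derivatives
  have hKD : ∀ v x, K (D v x) = D v (K x) := by
    intro v x
    -- K as a real-linear continuous map
    let KR : H →L[ℝ] H :=
      { toFun := K
        map_add' := map_add K
        map_smul' := fun r y => by
          simp only [RingHom.id_apply]
          show K (r • y) = r • K y
          rw [RCLike.real_smul_eq_coe_smul (K := ℂ) r y,
            RCLike.real_smul_eq_coe_smul (K := ℂ) r (K y), K.map_smulₛₗ,
            RCLike.conj_ofReal]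
        cont := K.continuous }
    have h1 : HasFDerivAt (fun η => K (P η x))
        (KR.comp (((ContinuousLinearMap.apply ℂ H x).restrictScalars ℝ).comp (fderiv ℝ P ξ))) ξ :=
      (KR.hasFDerivAt).comp ξ (hev x)
    have h2 : HasFDerivAt (fun η => P η (K x))
        (((ContinuousLinearMap.apply ℂ H (K x)).restrictScalars ℝ).comp (fderiv ℝ P ξ)) ξ :=
      hev (K x)
    have hfun : (fun η => K (P η x)) = fun η => P η (K x) := funext fun η => hK η x
    rw [hfun] at h1
    have h3 := h1.unique h2
    have happ := congrFun (congrArg (fun (T : (ℝ × ℝ) →L[ℝ] H) => (T : (ℝ × ℝ) → H)) h3) v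
    simp at happ
    exact happ
  -- the derivatives are self-adjoint
  have hstarD : ∀ v, star (D v) = D v := by
    intro v
    have h1 : HasFDerivAt (fun η => star (P η))
        ((((starL' ℝ : (H →L[ℂ] H) ≃L[ℝ] (H →L[ℂ] H)) :
          (H →L[ℂ] H) →L[ℝ] (H →L[ℂ] H))).comp (fderiv ℝ P ξ)) ξ :=
      ((hdiff ξ).hasFDerivAt).star
    have hfun : (fun η => star (P η)) = P := funext fun η => (hsa η).star_eq
    rw [hfun] at h1
    have h3 := h1.unique (hdiff ξ).hasFDerivAt
    have happ := congrFun (congrArg (fun (T : (ℝ × ℝ) →L[ℝ] (H →L[ℂ] H)) =>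
      (T : (ℝ × ℝ) → (H →L[ℂ] H))) h3) v
    simpa using happ
  -- K commutes with A
  have hKA : ∀ x, K (A x) = A (K x) := by
    intro x
    simp only [hAdef, ContinuousLinearMap.comp_apply, ContinuousLinearMap.sub_apply,
      map_sub, hKD, hK]
  -- trace formula over the standard orthonormal basis
  have htr : LinearMap.trace ℂ H A.toLinearMap =
      ∑ i, ⟪(stdOrthonormalBasis ℂ H) i, A ((stdOrthonormalBasis ℂ H) i)⟫_ℂ :=
    BerryAux.trace_eq_sum_inner _ _
  -- the trace of A is fixed by conjugation (via the antiunitary symmetry)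
  have htrK : LinearMap.trace ℂ H A.toLinearMap =
      (starRingEnd ℂ) (LinearMap.trace ℂ H A.toLinearMap) := by
    conv_lhs => rw [BerryAux.trace_eq_sum_inner (BerryAux.mapONB (stdOrthonormalBasis ℂ H) K)
      A.toLinearMap]
    rw [htr, map_sum]
    congr 1
    ext i
    rw [BerryAux.mapONB_apply, ContinuousLinearMap.coe_coe, ← hKA,
      BerryAux.antiunitary_inner, ← inner_conj_symm]
  -- the trace of A is purely imaginary (since A* = (reversed commutator) ∘ P)
  have hstarA : star A = (D (0, 1) ∘L D (1, 0) - D (1, 0) ∘L D (0, 1)) ∘L P ξ := by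
    have hA' : A = P ξ * (D (1, 0) * D (0, 1) - D (0, 1) * D (1, 0)) := rfl
    rw [hA', star_mul, star_sub, star_mul, star_mul, hstarD, hstarD, (hsa ξ).star_eq]
    rfl
  have hPB : P ξ ∘L (D (0, 1) ∘L D (1, 0) - D (1, 0) ∘L D (0, 1)) = -A := by
    show P ξ * (D (0, 1) * D (1, 0) - D (1, 0) * D (0, 1)) =
      -(P ξ * (D (1, 0) * D (0, 1) - D (0, 1) * D (1, 0)))
    rw [mul_sub, mul_sub, neg_sub]
  have htrIm : (starRingEnd ℂ) (LinearMap.trace ℂ H A.toLinearMap) =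
      - LinearMap.trace ℂ H A.toLinearMap := by
    have hconj : (starRingEnd ℂ) (LinearMap.trace ℂ H A.toLinearMap) =
        LinearMap.trace ℂ H (star A).toLinearMap := by
      rw [htr, map_sum, BerryAux.trace_eq_sum_inner (stdOrthonormalBasis ℂ H)]
      congr 1
      ext i
      rw [ContinuousLinearMap.coe_coe, ContinuousLinearMap.star_eq_adjoint,
        ContinuousLinearMap.adjoint_inner_right, inner_conj_symm]
    rw [hconj, hstarA]
    have hstep : ((D (0, 1) ∘L D (1, 0) - D (1, 0) ∘L D (0, 1)) ∘L P ξ).toLinearMap =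
        ((D (0, 1) ∘L D (1, 0) - D (1, 0) ∘L D (0, 1)).toLinearMap) * (P ξ).toLinearMap := rfl
    rw [hstep, LinearMap.trace_mul_comm]
    have hstep2 : ((P ξ).toLinearMap) * ((D (0, 1) ∘L D (1, 0) -
        D (1, 0) ∘L D (0, 1)).toLinearMap) =
        (P ξ ∘L (D (0, 1) ∘L D (1, 0) - D (1, 0) ∘L D (0, 1))).toLinearMap := rfl
    rw [hstep2, hPB]
    have hstep3 : ((-A : H →L[ℂ] H)).toLinearMap = -(A.toLinearMap) := rfl
    rw [hstep3, map_neg]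
  -- combine
  rw [hgoal]
  have h1 := htrK
  rw [htrIm] at h1
  have h2 : (2 : ℂ) * LinearMap.trace ℂ H A.toLinearMap = 0 := by linear_combination h1
  exact (mul_eq_zero.mp h2).resolve_left two_ne_zero
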